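/- Let L = (ka ⊕ kb) * (kx) be the free product (over a field k) of a 2-dimensional abelian Lie algebra M = ka ⊕ kb and a 1-dimensional Lie algebra kx, and let J be the ideal of L generated by x. Then J is a free Lie algebra with free basis T = { ad(a)^i ad(b)^j (x) : i, j ≥ 0 }, where ad(y)(s) = [s,y]. -/

import Mathlib

universe u

open FreeLieAlgebra

variable (k : Type u) [Field k]

universe v

section Machinery
variable {X : Type v}

theorem freeLie_span_top :
    LieSubalgebra.lieSpan k (FreeLieAlgebra k X) (Set.range (of k)) = ⊤ := by
  set S := LieSubalgebra.lieSpan k (FreeLieAlgebra k X) (Set.range (of k)) with hS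
  let g : FreeLieAlgebra k X →ₗ⁅k⁆ S :=
    lift k (fun x => ⟨of k x, LieSubalgebra.subset_lieSpan ⟨x, rfl⟩⟩)
  have h1 : S.incl.comp g = lift k (fun x => of k x) := by
    rw [← lift_comp_of (S.incl.comp g)]
    refine congrArg (lift k) (funext fun x => ?_)
    show S.incl (g (of k x)) = of k x
    simp only [g, lift_of_apply]
    rfl
  have h2 : (LieHom.id : FreeLieAlgebra k X →ₗ⁅k⁆ FreeLieAlgebra k X)
      = lift k (fun x => of k x) := by
    rw [← lift_comp_of (LieHom.id (R := k) (L₁ := FreeLieAlgebra k X))]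
    rfl
  rw [eq_top_iff]
  intro z _
  have : S.incl (g z) = z := by rw [← h2] at h1; exact LieHom.congr_fun h1 z
  rw [← this]; exact (g z).2

/-- Trivial (abelian) extension of `L` by its adjoint module: carrier `L × L`. -/
def TE (L : Type v) : Type v := L × L

section TEsec
variable (L : Type v) [LieRing L] [LieAlgebra k L]

instance : AddCommGroup (TE L) := Prod.instAddCommGroup
instance : Module k (TE L) := Prod.instModule

variable {L}

@[simp] lemma TE.add_fst (p q : TE L) : (p + q).1 = p.1 + q.1 := rfl
@[simp] lemma TE.add_snd (p q : TE L) : (p + q).2 = p.2 + q.2 := rfl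
@[simp] lemma TE.smul_fst (t : k) (p : TE L) : (t • p).1 = t • p.1 := rfl
@[simp] lemma TE.smul_snd (t : k) (p : TE L) : (t • p).2 = t • p.2 := rfl

variable (L)

instance : LieRing (TE L) where
  bracket p q := (⁅p.1, q.1⁆, ⁅p.1, q.2⁆ + ⁅p.2, q.1⁆)
  add_lie p q r := by
    show (_, _) = (_, _) + (_, _)
    ext
    · exact add_lie _ _ _
    · show ⁅(p + q).1, r.2⁆ + ⁅(p + q).2, r.1⁆ = _
      simp only [TE.add_fst, TE.add_snd, add_lie]
      show _ = (_, _).2 + (_, _).2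
      dsimp only
      abel
  lie_add p q r := by
    show (_, _) = (_, _) + (_, _)
    ext
    · exact lie_add _ _ _
    · show ⁅p.1, (q + r).2⁆ + ⁅p.2, (q + r).1⁆ = (_, _).2 + (_, _).2
      simp only [TE.add_fst, TE.add_snd, lie_add]
      abel
  lie_self p := by
    show (_, _) = (0 : TE L)
    ext
    · simp; rfl
    · show ⁅p.1, p.2⁆ + ⁅p.2, p.1⁆ = (0 : L × L).2
      rw [← lie_skew p.1 p.2]
      show _ = (0 : L)
      abel
  leibniz_lie p q r := by
    show (_, _) = (_, _) + (_, _)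
    ext
    · exact leibniz_lie _ _ _
    · show ⁅p.1, ⁅q.1, r.2⁆ + ⁅q.2, r.1⁆⁆ + ⁅p.2, ⁅q.1, r.1⁆⁆
        = (⁅⁅p.1, q.1⁆, r.2⁆ + ⁅⁅p.1, q.2⁆ + ⁅p.2, q.1⁆, r.1⁆)
          + (⁅q.1, ⁅p.1, r.2⁆ + ⁅p.2, r.1⁆⁆ + ⁅q.2, ⁅p.1, r.1⁆⁆)
      simp only [lie_add, add_lie, lie_lie]
      abel

instance : LieAlgebra k (TE L) where
  lie_smul t p q := by
    refine Prod.ext ?_ ?_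
    · exact lie_smul t p.1 q.1
    · show ⁅p.1, t • q.2⁆ + ⁅p.2, t • q.1⁆ = t • (⁅p.1, q.2⁆ + ⁅p.2, q.1⁆)
      rw [lie_smul, lie_smul, smul_add]

variable {L}

@[simp] lemma TE.bracket_def (p q : TE L) :
    ⁅p, q⁆ = ((⁅p.1, q.1⁆, ⁅p.1, q.2⁆ + ⁅p.2, q.1⁆) : TE L) := rfl

/-- First projection as a Lie algebra morphism. -/
def TE.fstHom : TE L →ₗ⁅k⁆ L where
  toFun p := p.1
  map_add' _ _ := rfl
  map_smul' _ _ := rfl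
  map_lie' := rfl
end TEsec

section liftD
variable {k} {X : Type v}

/-- Extend a map on generators to a Lie derivation of the free Lie algebra. -/
noncomputable def phiD (d : X → FreeLieAlgebra k X) :
    FreeLieAlgebra k X →ₗ⁅k⁆ TE (FreeLieAlgebra k X) :=
  lift k (fun x => ((of k x, d x) : TE (FreeLieAlgebra k X)))

@[simp] lemma phiD_of (d : X → FreeLieAlgebra k X) (x : X) :
    phiD d (of k x) = ((of k x, d x) : TE (FreeLieAlgebra k X)) :=
  lift_of_apply _ _

/-- Extend a map on generators to a Lie derivation of the free Lie algebra. -/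
noncomputable def liftD (d : X → FreeLieAlgebra k X) :
    LieDerivation k (FreeLieAlgebra k X) (FreeLieAlgebra k X) := by
  let φ : FreeLieAlgebra k X →ₗ⁅k⁆ TE (FreeLieAlgebra k X) := phiD d
  have hfst : ∀ f, (φ f).1 = f := by
    have h1 : (TE.fstHom (k := k)).comp φ = lift k (fun x => of k x) := by
      rw [← lift_comp_of ((TE.fstHom (k := k)).comp φ)]
      refine congrArg (lift k) (funext fun x => ?_)
      show TE.fstHom (k := k) (φ (of k x)) = of k x
      show (φ (of k x)).1 = of k x
      rw [show φ (of k x) = _ from phiD_of d x]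
    have h2 : (LieHom.id : FreeLieAlgebra k X →ₗ⁅k⁆ FreeLieAlgebra k X)
        = lift k (fun x => of k x) := by
      rw [← lift_comp_of (LieHom.id (R := k) (L₁ := FreeLieAlgebra k X))]
      rfl
    intro f
    rw [← h2] at h1
    exact LieHom.congr_fun h1 f
  exact
  { toLinearMap := (LinearMap.snd k (FreeLieAlgebra k X) (FreeLieAlgebra k X)).comp φ.toLinearMap
    leibniz' := fun a b => by
      show (φ ⁅a, b⁆).2 = ⁅a, (φ b).2⁆ - ⁅b, (φ a).2⁆
      rw [φ.map_lie]
      show ⁅(φ a).1, (φ b).2⁆ + ⁅(φ a).2, (φ b).1⁆ = _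
      rw [hfst, hfst, ← lie_skew b (φ a).2]
      abel }

@[simp] lemma liftD_of (d : X → FreeLieAlgebra k X) (x : X) :
    liftD d (of k x) = d x := by
  show (phiD d (of k x)).2 = d x
  rw [phiD_of]

end liftD

/-- Holomorph: semidirect product `L ⋊ Der(L)`. -/
def SD (k : Type u) (L : Type v) [Field k] [LieRing L] [LieAlgebra k L] : Type (max v v) :=
  L × LieDerivation k L L

section SDsec
variable (L : Type v) [LieRing L] [LieAlgebra k L]

instance : AddCommGroup (SD k L) := Prod.instAddCommGroup
instance : Module k (SD k L) := Prod.instModule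

variable {k L}

@[simp] lemma SD.add_fst (p q : SD k L) : (p + q).1 = p.1 + q.1 := rfl
@[simp] lemma SD.add_snd (p q : SD k L) : (p + q).2 = p.2 + q.2 := rfl
@[simp] lemma SD.smul_fst (t : k) (p : SD k L) : (t • p).1 = t • p.1 := rfl
@[simp] lemma SD.smul_snd (t : k) (p : SD k L) : (t • p).2 = t • p.2 := rfl

variable (k L)

instance : LieRing (SD k L) where
  bracket p q := (⁅p.1, q.1⁆ + p.2 q.1 - q.2 p.1, ⁅p.2, q.2⁆)
  add_lie p q r := by
    refine Prod.ext ?_ ?_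
    · show ⁅(p + q).1, r.1⁆ + (p + q).2 r.1 - r.2 (p + q).1
        = (⁅p.1, r.1⁆ + p.2 r.1 - r.2 p.1) + (⁅q.1, r.1⁆ + q.2 r.1 - r.2 q.1)
      simp only [SD.add_fst, SD.add_snd, add_lie, LieDerivation.add_apply, map_add]
      abel
    · show ⁅(p + q).2, r.2⁆ = ⁅p.2, r.2⁆ + ⁅q.2, r.2⁆
      simp only [SD.add_snd, add_lie]
  lie_add p q r := by
    refine Prod.ext ?_ ?_
    · show ⁅p.1, (q + r).1⁆ + p.2 (q + r).1 - (q + r).2 p.1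
        = (⁅p.1, q.1⁆ + p.2 q.1 - q.2 p.1) + (⁅p.1, r.1⁆ + p.2 r.1 - r.2 p.1)
      simp only [SD.add_fst, SD.add_snd, lie_add, LieDerivation.add_apply, map_add]
      abel
    · show ⁅p.2, (q + r).2⁆ = ⁅p.2, q.2⁆ + ⁅p.2, r.2⁆
      simp only [SD.add_snd, lie_add]
  lie_self p := by
    refine Prod.ext ?_ ?_
    · show ⁅p.1, p.1⁆ + p.2 p.1 - p.2 p.1 = (0 : SD k L).1
      show _ = (0 : L)
      simp
    · show ⁅p.2, p.2⁆ = (0 : SD k L).2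
      show _ = (0 : LieDerivation k L L)
      simp
  leibniz_lie p q r := by
    refine Prod.ext ?_ ?_
    · show ⁅p.1, ⁅q.1, r.1⁆ + q.2 r.1 - r.2 q.1⁆ + p.2 (⁅q.1, r.1⁆ + q.2 r.1 - r.2 q.1)
          - ⁅q.2, r.2⁆ p.1
        = (⁅⁅p.1, q.1⁆ + p.2 q.1 - q.2 p.1, r.1⁆ + ⁅p.2, q.2⁆ r.1
            - r.2 (⁅p.1, q.1⁆ + p.2 q.1 - q.2 p.1))
          + (⁅q.1, ⁅p.1, r.1⁆ + p.2 r.1 - r.2 p.1⁆ + q.2 (⁅p.1, r.1⁆ + p.2 r.1 - r.2 p.1)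
            - ⁅p.2, r.2⁆ q.1)
      simp only [lie_add, lie_sub, add_lie, sub_lie, map_add, map_sub, lie_lie,
        LieDerivation.commutator_apply, LieDerivation.apply_lie_eq_add]
      rw [show (⁅r.2 p.1, q.1⁆ : L) = -⁅q.1, r.2 p.1⁆ from (lie_skew _ _).symm]
      abel
    · show ⁅p.2, ⁅q.2, r.2⁆⁆ = ⁅⁅p.2, q.2⁆, r.2⁆ + ⁅q.2, ⁅p.2, r.2⁆⁆
      exact leibniz_lie _ _ _

instance : LieAlgebra k (SD k L) where
  lie_smul t p q := by
    refine Prod.ext ?_ ?_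
    · show ⁅p.1, (t • q).1⁆ + p.2 (t • q).1 - (t • q).2 p.1
        = t • (⁅p.1, q.1⁆ + p.2 q.1 - q.2 p.1)
      simp only [SD.smul_fst, SD.smul_snd, lie_smul, map_smul, LieDerivation.smul_apply,
        smul_add, smul_sub]
    · show ⁅p.2, (t • q).2⁆ = t • ⁅p.2, q.2⁆
      show ⁅p.2, t • q.2⁆ = t • ⁅p.2, q.2⁆
      exact lie_smul t p.2 q.2

variable {k L}

lemma SD.bracket_def (p q : SD k L) :
    ⁅p, q⁆ = ((⁅p.1, q.1⁆ + p.2 q.1 - q.2 p.1, ⁅p.2, q.2⁆) : SD k L) := rfl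

/-- Inclusion of `L` in the holomorph as a Lie algebra morphism. -/
def SD.inl : L →ₗ⁅k⁆ SD k L where
  toFun f := (f, 0)
  map_add' f g := Prod.ext rfl (add_zero (0 : LieDerivation k L L)).symm
  map_smul' t f := Prod.ext rfl (smul_zero (A := LieDerivation k L L) t).symm
  map_lie' {f g} := by
    refine Prod.ext ?_ ?_
    · show ⁅f, g⁆ = ⁅f, g⁆ + (0 : LieDerivation k L L) g - (0 : LieDerivation k L L) f
      simp
    · show (0 : LieDerivation k L L) = ⁅(0 : LieDerivation k L L), 0⁆
      simp

lemma SD.inl_injective : Function.Injective (SD.inl : L →ₗ⁅k⁆ SD k L) :=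
  fun f g h => congrArg Prod.fst h

end SDsec

section SDextra
variable {L : Type v} [LieRing L] [LieAlgebra k L]

/-- Inclusion of derivations into the holomorph. -/
def SD.inr (u : LieDerivation k L L) : SD k L := (0, u)

lemma SD.lie_inl_inr (f : L) (u : LieDerivation k L L) :
    ⁅(SD.inl f : SD k L), SD.inr k u⁆ = SD.inl (-(u f)) := by
  refine Prod.ext ?_ ?_
  · show ⁅f, (0 : L)⁆ + (0 : LieDerivation k L L) (0 : L) - u f = -(u f)
    simp
  · show ⁅(0 : LieDerivation k L L), u⁆ = 0
    simp

lemma SD.lie_inr_inr (u v : LieDerivation k L L) :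
    ⁅(SD.inr k u : SD k L), SD.inr k v⁆ = SD.inr k ⁅u, v⁆ := by
  refine Prod.ext ?_ ?_
  · show ⁅(0 : L), (0 : L)⁆ + u 0 - v 0 = (0 : L)
    simp
  · rfl

end SDextra

lemma lift_of_eq_id (X : Type v) :
    lift k (fun x : X => of k x) = (LieHom.id : FreeLieAlgebra k X →ₗ⁅k⁆ FreeLieAlgebra k X) := by
  rw [← lift_comp_of (LieHom.id (R := k) (L₁ := FreeLieAlgebra k X))]
  rfl

end Machinery

/-- The relator ideal of `L = ⟨a,b,x | [a,b]⟩` inside the free Lie algebra on `a,b,x`. -/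
noncomputable def relIdeal : LieIdeal k (FreeLieAlgebra k (Fin 3)) :=
  LieSubmodule.lieSpan k (FreeLieAlgebra k (Fin 3))
    ({⁅of k (0 : Fin 3), of k (1 : Fin 3)⁆} : Set (FreeLieAlgebra k (Fin 3)))

/-- `L = (ka ⊕ kb) * kx = ⟨a,b,x | [a,b]⟩`, the free product of the two-dimensional abelian
Lie algebra on `a,b` with the one-dimensional Lie algebra on `x`. -/
noncomputable def Lfp : Type u := FreeLieAlgebra k (Fin 3) ⧸ relIdeal k

noncomputable instance : LieRing (Lfp k) := by unfold Lfp; infer_instance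
noncomputable instance : LieAlgebra k (Lfp k) := by unfold Lfp; infer_instance

/-- The images of the generators `a`, `b`, `x` in `L`. -/
noncomputable def gen (i : Fin 3) : Lfp k :=
  LieSubmodule.Quotient.mk' (relIdeal k) (of k i)

/-- The ideal `J` of `L` generated by `x`. -/
noncomputable def Jideal : LieIdeal k (Lfp k) :=
  LieSubmodule.lieSpan k (Lfp k) ({gen k 2} : Set (Lfp k))

/-- `T i j = ad(a)^i ad(b)^j (x)`, where `ad(y)(s) = ⁅s,y⁆`. -/
noncomputable def Telt (i j : ℕ) : Lfp k :=
  (fun s => ⁅s, gen k 0⁆)^[i] ((fun s => ⁅s, gen k 1⁆)^[j] (gen k 2))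

/-! ### The specific development -/

-- For brevity
local notation "F3" => FreeLieAlgebra k (Fin 3)
local notation "FN" => FreeLieAlgebra k (ℕ × ℕ)

noncomputable def Da : LieDerivation k (FreeLieAlgebra k (ℕ × ℕ)) (FreeLieAlgebra k (ℕ × ℕ)) :=
  liftD (fun p => of k (p.1 + 1, p.2))

noncomputable def Db : LieDerivation k (FreeLieAlgebra k (ℕ × ℕ)) (FreeLieAlgebra k (ℕ × ℕ)) :=
  liftD (fun p => of k (p.1, p.2 + 1))

@[simp] lemma Da_of (p : ℕ × ℕ) : Da k (of k p) = of k (p.1 + 1, p.2) := liftD_of _ _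
@[simp] lemma Db_of (p : ℕ × ℕ) : Db k (of k p) = of k (p.1, p.2 + 1) := liftD_of _ _

lemma DaDb_comm : ⁅Da k, Db k⁆ = (0 : LieDerivation k FN FN) := by
  apply LieDerivation.ext_of_lieSpan_eq_top (Set.range (of k)) (freeLie_span_top k)
  rintro _ ⟨p, rfl⟩
  show ⁅Da k, Db k⁆ (of k p) = (0 : LieDerivation k FN FN) (of k p)
  rw [LieDerivation.commutator_apply]
  simp

/-- The map from the free Lie algebra on `a, b, x` to the holomorph of `FN`. -/
noncomputable def Phi : FreeLieAlgebra k (Fin 3) →ₗ⁅k⁆ SD k (FreeLieAlgebra k (ℕ × ℕ)) :=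
  lift k ![SD.inr k (-Da k), SD.inr k (-Db k), SD.inl (of k ((0 : ℕ), (0 : ℕ)))]

@[simp] lemma Phi_of_0 : Phi k (of k (0 : Fin 3)) = SD.inr k (-Da k) := by
  rw [Phi, lift_of_apply]; rfl
@[simp] lemma Phi_of_1 : Phi k (of k (1 : Fin 3)) = SD.inr k (-Db k) := by
  rw [Phi, lift_of_apply]; rfl
@[simp] lemma Phi_of_2 : Phi k (of k (2 : Fin 3)) = SD.inl (of k ((0 : ℕ), (0 : ℕ))) := by
  rw [Phi, lift_of_apply]; rfl

lemma Phi_rel : Phi k ⁅of k (0 : Fin 3), of k (1 : Fin 3)⁆ = 0 := by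
  rw [LieHom.map_lie, Phi_of_0, Phi_of_1, SD.lie_inr_inr]
  have : ⁅-Da k, -Db k⁆ = (0 : LieDerivation k FN FN) := by
    rw [neg_lie, lie_neg, neg_neg, DaDb_comm]
  rw [this]
  rfl

lemma rel_le_ker : relIdeal k ≤ (Phi k).ker := by
  rw [relIdeal]
  rw [LieSubmodule.lieSpan_le]
  intro z hz
  rw [Set.mem_singleton_iff] at hz
  subst hz
  show ⁅of k (0 : Fin 3), of k (1 : Fin 3)⁆ ∈ (Phi k).ker
  rw [LieHom.mem_ker]
  exact Phi_rel k

/-- `mk` as a Lie algebra morphism `F3 →ₗ⁅k⁆ Lfp k`. -/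
noncomputable def mkHom : FreeLieAlgebra k (Fin 3) →ₗ⁅k⁆ Lfp k :=
  { (relIdeal k).toSubmodule.mkQ with
    map_lie' := rfl }

lemma mkHom_surjective : Function.Surjective (mkHom k) :=
  Submodule.Quotient.mk_surjective _

lemma mkHom_eq_gen (i : Fin 3) : mkHom k (of k i) = gen k i := rfl

/-- The induced map `Lfp k → SD k FN`. -/
noncomputable def Phi' : Lfp k →ₗ⁅k⁆ SD k (FreeLieAlgebra k (ℕ × ℕ)) :=
  { (Submodule.liftQ (relIdeal k).toSubmodule (Phi k).toLinearMap
      (fun f hf => LieHom.mem_ker.mp (rel_le_ker k hf)) :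
        Lfp k →ₗ[k] SD k (FreeLieAlgebra k (ℕ × ℕ))) with
    map_lie' := by
      intro x y
      obtain ⟨x, rfl⟩ := mkHom_surjective k x
      obtain ⟨y, rfl⟩ := mkHom_surjective k y
      show Submodule.liftQ _ _ _ (mkHom k ⁅x, y⁆) = ⁅Submodule.liftQ _ _ _ (mkHom k x),
        Submodule.liftQ _ _ _ (mkHom k y)⁆
      show Phi k ⁅x, y⁆ = ⁅(Phi k x : SD k FN), (Phi k y : SD k FN)⁆
      exact (Phi k).map_lie x y }

lemma Phi'_mk (f : FreeLieAlgebra k (Fin 3)) : Phi' k (mkHom k f) = Phi k f := rfl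

lemma Phi'_gen (i : Fin 3) : Phi' k (gen k i) = Phi k (of k i) := rfl


lemma mkHom_rel_zero : ⁅gen k 0, gen k 1⁆ = (0 : Lfp k) := by
  have h1 : ⁅gen k 0, gen k 1⁆ = mkHom k ⁅of k (0 : Fin 3), of k (1 : Fin 3)⁆ :=
    ((mkHom k).map_lie _ _).symm
  rw [h1]
  show LieSubmodule.Quotient.mk (N := relIdeal k) _ = 0
  rw [LieSubmodule.Quotient.mk_eq_zero']
  exact LieSubmodule.subset_lieSpan rfl

lemma Telt_zero_zero : Telt k 0 0 = gen k 2 := rfl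

lemma Telt_succ_left (i j : ℕ) : Telt k (i + 1) j = ⁅Telt k i j, gen k 0⁆ :=
  Function.iterate_succ_apply' _ _ _

lemma Telt_zero_succ (j : ℕ) : Telt k 0 (j + 1) = ⁅Telt k 0 j, gen k 1⁆ := by
  show (fun s => ⁅s, gen k 1⁆)^[j + 1] (gen k 2) = ⁅(fun s => ⁅s, gen k 1⁆)^[j] (gen k 2), gen k 1⁆
  rw [Function.iterate_succ_apply']

lemma swap01 (s : Lfp k) : ⁅⁅s, gen k 0⁆, gen k 1⁆ = ⁅⁅s, gen k 1⁆, gen k 0⁆ := by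
  calc ⁅⁅s, gen k 0⁆, gen k 1⁆
      = ⁅s, ⁅gen k 0, gen k 1⁆⁆ - ⁅gen k 0, ⁅s, gen k 1⁆⁆ := lie_lie _ _ _
    _ = -⁅gen k 0, ⁅s, gen k 1⁆⁆ := by rw [mkHom_rel_zero, lie_zero, zero_sub]
    _ = ⁅⁅s, gen k 1⁆, gen k 0⁆ := lie_skew _ _

lemma Telt_succ_right (i j : ℕ) : Telt k i (j + 1) = ⁅Telt k i j, gen k 1⁆ := by
  induction i with
  | zero => exact Telt_zero_succ k j
  | succ i ih =>
      rw [Telt_succ_left, Telt_succ_left, ih, ← swap01]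

lemma lie_inl_inr_neg (f : FreeLieAlgebra k (ℕ × ℕ)) (u : LieDerivation k FN FN) :
    ⁅(SD.inl f : SD k FN), SD.inr k (-u)⁆ = SD.inl (u f) := by
  rw [SD.lie_inl_inr]
  congr 1
  rw [LieDerivation.neg_apply, neg_neg]

lemma Phi'_Telt (i j : ℕ) : Phi' k (Telt k i j) = SD.inl (of k (i, j)) := by
  have key0 : ∀ j : ℕ, Phi' k (Telt k 0 j) = SD.inl (of k ((0 : ℕ), j)) := by
    intro j
    induction j with
    | zero => exact Phi'_gen k 2 ▸ Phi_of_2 k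
    | succ j ih =>
        rw [Telt_zero_succ, (Phi' k).map_lie, ih, Phi'_gen, Phi_of_1, lie_inl_inr_neg, Db_of]
  induction i with
  | zero => exact key0 j
  | succ i ih =>
      rw [Telt_succ_left, (Phi' k).map_lie, ih, Phi'_gen, Phi_of_0, lie_inl_inr_neg, Da_of]

/-- The candidate free-basis morphism. -/
noncomputable def eHom : FreeLieAlgebra k (ℕ × ℕ) →ₗ⁅k⁆ Lfp k :=
  lift k (fun p => Telt k p.1 p.2)

@[simp] lemma eHom_of (p : ℕ × ℕ) : eHom k (of k p) = Telt k p.1 p.2 := lift_of_apply _ _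

lemma Phi'_comp_eHom (f : FreeLieAlgebra k (ℕ × ℕ)) : Phi' k (eHom k f) = SD.inl f := by
  have h1 : (Phi' k).comp (eHom k) = lift k (fun p : ℕ × ℕ => SD.inl (of k p)) := by
    rw [← lift_comp_of ((Phi' k).comp (eHom k))]
    refine congrArg (lift k) (funext fun p => ?_)
    show Phi' k (eHom k (of k p)) = SD.inl (of k p)
    rw [eHom_of, Phi'_Telt]
  have h2 : (SD.inl : FN →ₗ⁅k⁆ SD k FN).comp (lift k (fun p : ℕ × ℕ => of k p))
      = lift k (fun p : ℕ × ℕ => SD.inl (of k p)) := by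
    rw [← lift_comp_of ((SD.inl : FN →ₗ⁅k⁆ SD k FN).comp (lift k (fun p : ℕ × ℕ => of k p)))]
    refine congrArg (lift k) (funext fun p => ?_)
    show SD.inl (lift k (fun p : ℕ × ℕ => of k p) (of k p)) = SD.inl (of k p)
    rw [lift_of_apply]
  rw [lift_of_eq_id] at h2
  have := h1.trans h2.symm
  exact LieHom.congr_fun this f

lemma eHom_injective : Function.Injective (eHom k) := by
  intro f g h
  have : SD.inl f = (SD.inl g : SD k FN) := by
    rw [← Phi'_comp_eHom, ← Phi'_comp_eHom, h]
  exact SD.inl_injective this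

lemma Telt_mem_Jideal (i j : ℕ) : Telt k i j ∈ Jideal k := by
  have step : ∀ (s : Lfp k) (y : Lfp k), s ∈ Jideal k → ⁅s, y⁆ ∈ Jideal k := by
    intro s y hs
    rw [← lie_skew]
    exact neg_mem ((Jideal k).lie_mem hs)
  induction i with
  | zero =>
      induction j with
      | zero => exact LieSubmodule.subset_lieSpan rfl
      | succ j ih => rw [Telt_zero_succ]; exact step _ _ ih
  | succ i ih => rw [Telt_succ_left]; exact step _ _ ih

lemma eHom_range_le (f : FreeLieAlgebra k (ℕ × ℕ)) : eHom k f ∈ Jideal k := by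
  let Jsub : LieSubalgebra k (Lfp k) := LieIdeal.toLieSubalgebra k (Lfp k) (Jideal k)
  let e' : FreeLieAlgebra k (ℕ × ℕ) →ₗ⁅k⁆ Jsub :=
    lift k (fun p => (⟨Telt k p.1 p.2, Telt_mem_Jideal k p.1 p.2⟩ : Jsub))
  have h1 : Jsub.incl.comp e' = eHom k := by
    rw [← lift_comp_of (Jsub.incl.comp e'), eHom]
    refine congrArg (lift k) (funext fun p => ?_)
    show Jsub.incl (e' (of k p)) = Telt k p.1 p.2
    show (e' (of k p) : Lfp k) = Telt k p.1 p.2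
    rw [show e' (of k p) = _ from lift_of_apply _ p]
  have : eHom k f = (e' f : Lfp k) := by rw [← h1]; rfl
  rw [this]
  exact (e' f).2

/-- Bracketing with `gen 0` corresponds to `Da` under `eHom`. -/
lemma eHom_lie_gen0 (f : FreeLieAlgebra k (ℕ × ℕ)) :
    ⁅eHom k f, gen k 0⁆ = eHom k (Da k f) := by
  let θ : FreeLieAlgebra k (ℕ × ℕ) →ₗ⁅k⁆ TE (Lfp k) :=
    { toFun := fun f => ((eHom k f, ⁅eHom k f, gen k 0⁆) : TE (Lfp k))
      map_add' := fun f g => by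
        refine Prod.ext ?_ ?_
        · show eHom k (f + g) = eHom k f + eHom k g; rw [map_add]
        · show ⁅eHom k (f + g), gen k 0⁆ = ⁅eHom k f, gen k 0⁆ + ⁅eHom k g, gen k 0⁆
          rw [map_add, add_lie]
      map_smul' := fun t f => by
        refine Prod.ext ?_ ?_
        · show eHom k (t • f) = t • eHom k f; rw [map_smul]
        · show ⁅eHom k (t • f), gen k 0⁆ = t • ⁅eHom k f, gen k 0⁆
          rw [map_smul, smul_lie]
      map_lie' := fun {f g} => by
        refine Prod.ext ?_ ?_
        · exact (eHom k).map_lie f g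
        · show ⁅eHom k ⁅f, g⁆, gen k 0⁆
            = ⁅eHom k f, ⁅eHom k g, gen k 0⁆⁆ + ⁅⁅eHom k f, gen k 0⁆, eHom k g⁆
          rw [(eHom k).map_lie, lie_lie]
          rw [show ⁅⁅eHom k f, gen k 0⁆, eHom k g⁆
            = -⁅eHom k g, ⁅eHom k f, gen k 0⁆⁆ from (lie_skew _ _).symm]
          abel }
  let θ' : FreeLieAlgebra k (ℕ × ℕ) →ₗ⁅k⁆ TE (Lfp k) :=
    { toFun := fun f => ((eHom k f, eHom k (Da k f)) : TE (Lfp k))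
      map_add' := fun f g => by
        refine Prod.ext ?_ ?_
        · show eHom k (f + g) = eHom k f + eHom k g; rw [map_add]
        · show eHom k (Da k (f + g)) = eHom k (Da k f) + eHom k (Da k g)
          rw [map_add, map_add]
      map_smul' := fun t f => by
        refine Prod.ext ?_ ?_
        · show eHom k (t • f) = t • eHom k f; rw [map_smul]
        · show eHom k (Da k (t • f)) = t • eHom k (Da k f)
          rw [map_smul, map_smul]
      map_lie' := fun {f g} => by
        refine Prod.ext ?_ ?_
        · exact (eHom k).map_lie f g
        · show eHom k (Da k ⁅f, g⁆)
            = ⁅eHom k f, eHom k (Da k g)⁆ + ⁅eHom k (Da k f), eHom k g⁆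
          rw [LieDerivation.apply_lie_eq_add, map_add, (eHom k).map_lie, (eHom k).map_lie]
           }
  have hθ : θ = θ' := by
    rw [← lift_comp_of θ, ← lift_comp_of θ']
    refine congrArg (lift k) (funext fun p => ?_)
    show ((eHom k (of k p), ⁅eHom k (of k p), gen k 0⁆) : TE (Lfp k))
      = ((eHom k (of k p), eHom k (Da k (of k p))) : TE (Lfp k))
    rw [eHom_of, Da_of, eHom_of, ← Telt_succ_left]
  have := congrArg Prod.snd (LieHom.congr_fun hθ f)
  exact this

/-- Bracketing with `gen 1` corresponds to `Db` under `eHom`. -/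
lemma eHom_lie_gen1 (f : FreeLieAlgebra k (ℕ × ℕ)) :
    ⁅eHom k f, gen k 1⁆ = eHom k (Db k f) := by
  let θ : FreeLieAlgebra k (ℕ × ℕ) →ₗ⁅k⁆ TE (Lfp k) :=
    { toFun := fun f => ((eHom k f, ⁅eHom k f, gen k 1⁆) : TE (Lfp k))
      map_add' := fun f g => by
        refine Prod.ext ?_ ?_
        · show eHom k (f + g) = eHom k f + eHom k g; rw [map_add]
        · show ⁅eHom k (f + g), gen k 1⁆ = ⁅eHom k f, gen k 1⁆ + ⁅eHom k g, gen k 1⁆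
          rw [map_add, add_lie]
      map_smul' := fun t f => by
        refine Prod.ext ?_ ?_
        · show eHom k (t • f) = t • eHom k f; rw [map_smul]
        · show ⁅eHom k (t • f), gen k 1⁆ = t • ⁅eHom k f, gen k 1⁆
          rw [map_smul, smul_lie]
      map_lie' := fun {f g} => by
        refine Prod.ext ?_ ?_
        · exact (eHom k).map_lie f g
        · show ⁅eHom k ⁅f, g⁆, gen k 1⁆
            = ⁅eHom k f, ⁅eHom k g, gen k 1⁆⁆ + ⁅⁅eHom k f, gen k 1⁆, eHom k g⁆
          rw [(eHom k).map_lie, lie_lie]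
          rw [show ⁅⁅eHom k f, gen k 1⁆, eHom k g⁆
            = -⁅eHom k g, ⁅eHom k f, gen k 1⁆⁆ from (lie_skew _ _).symm]
          abel }
  let θ' : FreeLieAlgebra k (ℕ × ℕ) →ₗ⁅k⁆ TE (Lfp k) :=
    { toFun := fun f => ((eHom k f, eHom k (Db k f)) : TE (Lfp k))
      map_add' := fun f g => by
        refine Prod.ext ?_ ?_
        · show eHom k (f + g) = eHom k f + eHom k g; rw [map_add]
        · show eHom k (Db k (f + g)) = eHom k (Db k f) + eHom k (Db k g)
          rw [map_add, map_add]
      map_smul' := fun t f => by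
        refine Prod.ext ?_ ?_
        · show eHom k (t • f) = t • eHom k f; rw [map_smul]
        · show eHom k (Db k (t • f)) = t • eHom k (Db k f)
          rw [map_smul, map_smul]
      map_lie' := fun {f g} => by
        refine Prod.ext ?_ ?_
        · exact (eHom k).map_lie f g
        · show eHom k (Db k ⁅f, g⁆)
            = ⁅eHom k f, eHom k (Db k g)⁆ + ⁅eHom k (Db k f), eHom k g⁆
          rw [LieDerivation.apply_lie_eq_add, map_add, (eHom k).map_lie, (eHom k).map_lie]
           }
  have hθ : θ = θ' := by
    rw [← lift_comp_of θ, ← lift_comp_of θ']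
    refine congrArg (lift k) (funext fun p => ?_)
    show ((eHom k (of k p), ⁅eHom k (of k p), gen k 1⁆) : TE (Lfp k))
      = ((eHom k (of k p), eHom k (Db k (of k p))) : TE (Lfp k))
    rw [eHom_of, Db_of, eHom_of, ← Telt_succ_right]
  exact congrArg Prod.snd (LieHom.congr_fun hθ f)

lemma eHom_range_ideal (x : Lfp k) (m : Lfp k) (hm : m ∈ (eHom k).range) :
    ⁅x, m⁆ ∈ (eHom k).range := by
  let N : LieSubalgebra k (Lfp k) :=
    { carrier := {x | ∀ m ∈ (eHom k).range, ⁅x, m⁆ ∈ (eHom k).range}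
      add_mem' := fun {x y} hx hy m hm => by
        rw [add_lie]; exact ((eHom k).range : LieSubalgebra k (Lfp k)).add_mem (hx m hm) (hy m hm)
      zero_mem' := fun m hm => by
        rw [zero_lie]; exact ((eHom k).range).zero_mem
      smul_mem' := fun t x hx m hm => by
        rw [smul_lie]; exact ((eHom k).range).smul_mem t (hx m hm)
      lie_mem' := fun {x y} hx hy m hm => by
        rw [lie_lie]
        exact ((eHom k).range).sub_mem (hx _ (hy m hm)) (hy _ (hx m hm)) }
  have hgen0 : ∀ m ∈ (eHom k).range, ⁅gen k 0, m⁆ ∈ (eHom k).range := by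
    intro m hm
    obtain ⟨f, rfl⟩ := ((eHom k).mem_range m).mp hm
    rw [← lie_skew, eHom_lie_gen0]
    exact neg_mem ((eHom k).mem_range_self _)
  have hgen1 : ∀ m ∈ (eHom k).range, ⁅gen k 1, m⁆ ∈ (eHom k).range := by
    intro m hm
    obtain ⟨f, rfl⟩ := ((eHom k).mem_range m).mp hm
    rw [← lie_skew, eHom_lie_gen1]
    exact neg_mem ((eHom k).mem_range_self _)
  have hgen2 : ∀ m ∈ (eHom k).range, ⁅gen k 2, m⁆ ∈ (eHom k).range := by
    intro m hm
    obtain ⟨f, rfl⟩ := ((eHom k).mem_range m).mp hm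
    have h2 : gen k 2 = eHom k (of k ((0 : ℕ), (0 : ℕ))) := by rw [eHom_of]; rfl
    rw [h2, ← (eHom k).map_lie]
    exact (eHom k).mem_range_self _
  have hgen : ∀ i : Fin 3, gen k i ∈ N := by
    intro i
    fin_cases i
    · exact hgen0
    · exact hgen1
    · exact hgen2
  have hN : ∀ x : Lfp k, x ∈ N := by
    intro x
    obtain ⟨f, rfl⟩ := mkHom_surjective k x
    have hle : LieSubalgebra.lieSpan k (FreeLieAlgebra k (Fin 3)) (Set.range (of k))
        ≤ N.comap (mkHom k) := by
      rw [LieSubalgebra.lieSpan_le]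
      rintro _ ⟨i, rfl⟩
      show mkHom k (of k i) ∈ N
      rw [mkHom_eq_gen]
      exact hgen i
    rw [freeLie_span_top] at hle
    exact hle (LieSubalgebra.mem_top f)
  exact hN x m hm


/-- In `L = (ka ⊕ kb) * kx`, the ideal `J` generated by `x` is a free Lie algebra with
free basis `T = { ad(a)^i ad(b)^j (x) : i, j ≥ 0 }`. -/
theorem ideal_of_x_is_free :
    ∃ e : FreeLieAlgebra k (ℕ × ℕ) →ₗ⁅k⁆ Lfp k,
      Function.Injective e ∧
      (∀ y : Lfp k, y ∈ e.range ↔ y ∈ Jideal k) ∧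
      (∀ i j : ℕ, e (of k (i, j)) = Telt k i j) := by
  refine ⟨eHom k, eHom_injective k, fun y => ?_, fun i j => by rw [eHom_of]⟩
  constructor
  · rintro ⟨f, rfl⟩
    exact eHom_range_le k f
  · intro hy
    let I : LieIdeal k (Lfp k) :=
      { ((eHom k).range : LieSubalgebra k (Lfp k)).toSubmodule with
        lie_mem := fun {x m} hm => eHom_range_ideal k x m hm }
    have hle : Jideal k ≤ I := by
      rw [Jideal, LieSubmodule.lieSpan_le]
      rintro _ rfl
      show gen k 2 ∈ I
      exact ⟨of k ((0 : ℕ), (0 : ℕ)), (eHom_of k ((0 : ℕ), (0 : ℕ))).trans rfl⟩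
    exact hle hy
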